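/- Let d ≥ 3 and let Γ be the Odd graph O_{d+1}. Fix a vertex γ. Then: (1) for every integer h with 1 ≤ h ≤ d−1, no two vertices of Γ_h(γ) are adjacent in Γ (the h-th subconstituent has no edges); and (2) every vertex of Γ_d(γ) has exactly ⌈(d+1)/2⌉ neighbors in Γ_d(γ) (the d-th subconstituent is regular with valency ⌈(d+1)/2⌉). -/

import Mathlib

open Finset

/-- The vertices of the Odd graph `O_{d+1}`: the `d`-element subsets of a fixed
`(2d+1)`-element set. -/
abbrev OddVertex (d : ℕ) : Type := {s : Finset (Fin (2 * d + 1)) // s.card = d}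

/-- The Odd graph `O_{d+1}`: two `d`-subsets of a `(2d+1)`-set are adjacent whenever
they are disjoint. -/
def oddGraph (d : ℕ) : SimpleGraph (OddVertex d) where
  Adj α β := α ≠ β ∧ Disjoint (α : Finset (Fin (2 * d + 1))) (β : Finset (Fin (2 * d + 1)))
  symm := by
    constructor
    intro α β h
    exact ⟨h.1.symm, h.2.symm⟩
  loopless := by
    constructor
    intro α h
    exact h.1 rfl

namespace OddAux

variable {d : ℕ}

/-- The intersection number of two vertices. -/
def t (α β : OddVertex d) : ℕ :=
  ((α : Finset (Fin (2 * d + 1))) ∩ (β : Finset (Fin (2 * d + 1)))).card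

/-- The candidate distance function. -/
def fdist (α β : OddVertex d) : ℕ := min (2 * (d - t α β)) (2 * t α β + 1)

lemma t_le (α β : OddVertex d) : t α β ≤ d := by
  unfold t
  calc ((α : Finset (Fin (2*d+1))) ∩ (β : Finset (Fin (2*d+1)))).card
      ≤ (α : Finset (Fin (2*d+1))).card := Finset.card_le_card Finset.inter_subset_left
    _ = d := α.2

lemma t_comm (α β : OddVertex d) : t α β = t β α := by
  simp [t, Finset.inter_comm]

lemma t_self (α : OddVertex d) : t α α = d := by
  simp [t, α.2]

lemma eq_of_t_eq {α β : OddVertex d} (h : t α β = d) : α = β := by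
  have h1 : (α : Finset (Fin (2*d+1))) ∩ β = α := by
    apply Finset.eq_of_subset_of_card_le Finset.inter_subset_left
    rw [show ((α : Finset (Fin (2*d+1))) ∩ β).card = d from h, α.2]
  have hsub : (α : Finset (Fin (2*d+1))) ⊆ β := by
    rw [← h1]; exact Finset.inter_subset_right
  exact Subtype.ext (Finset.eq_of_subset_of_card_le hsub (by rw [α.2, β.2]))

lemma card_compl (β : OddVertex d) : ((β : Finset (Fin (2*d+1)))ᶜ).card = d + 1 := by
  rw [Finset.card_compl, β.2, Fintype.card_fin]
  omega

lemma card_sdiff_eq (α β : OddVertex d) :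
    ((α : Finset (Fin (2*d+1))) \ β).card = d - t α β := by
  have := Finset.card_inter_add_card_sdiff (α : Finset (Fin (2*d+1))) (β : Finset (Fin (2*d+1)))
  rw [α.2] at this
  unfold t; omega

lemma inter_compl_eq (α β : OddVertex d) :
    (α : Finset (Fin (2*d+1))) ∩ (β : Finset (Fin (2*d+1)))ᶜ
      = (α : Finset (Fin (2*d+1))) \ β := by
  ext x; simp [Finset.mem_sdiff, Finset.mem_inter, Finset.mem_compl]

lemma card_inter_compl (α β : OddVertex d) :
    ((α : Finset (Fin (2*d+1))) ∩ (β : Finset (Fin (2*d+1)))ᶜ).card = d - t α β := by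
  rw [inter_compl_eq, card_sdiff_eq]

lemma subset_compl_of_adj {β β' : OddVertex d} (h : (oddGraph d).Adj β β') :
    (β' : Finset (Fin (2*d+1))) ⊆ (β : Finset (Fin (2*d+1)))ᶜ := by
  intro x hx
  rw [Finset.mem_compl]
  exact fun hxβ => (Finset.disjoint_left.mp h.2) hxβ hx

/-- Key step inequality: along an edge, intersection numbers with a fixed vertex
are nearly complementary. -/
lemma step (α β β' : OddVertex d) (h : (oddGraph d).Adj β β') :
    d - 1 ≤ t α β + t α β' ∧ t α β + t α β' ≤ d := by
  have hsub : (β' : Finset (Fin (2*d+1))) ⊆ (β : Finset (Fin (2*d+1)))ᶜ := subset_compl_of_adj h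
  have h1 : t α β' ≤ d - t α β := by
    rw [← card_sdiff_eq α β]
    apply Finset.card_le_card
    intro x hx
    rw [Finset.mem_inter] at hx
    rw [Finset.mem_sdiff]
    exact ⟨hx.1, Finset.mem_compl.mp (hsub hx.2)⟩
  have h2 : d - t α β ≤ t α β' + 1 := by
    have hcard : (((β : Finset (Fin (2*d+1)))ᶜ) \ β').card = 1 := by
      rw [Finset.card_sdiff_of_subset hsub, card_compl, β'.2]
      omega
    have hsub2 : (α : Finset (Fin (2*d+1))) \ β ⊆
        ((α : Finset (Fin (2*d+1))) ∩ β') ∪ ((β : Finset (Fin (2*d+1)))ᶜ \ β') := by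
      intro x hx
      rw [Finset.mem_sdiff] at hx
      rw [Finset.mem_union, Finset.mem_inter, Finset.mem_sdiff, Finset.mem_compl]
      by_cases hb : x ∈ (β' : Finset (Fin (2*d+1)))
      · exact Or.inl ⟨hx.1, hb⟩
      · exact Or.inr ⟨hx.2, hb⟩
    have hc1 := Finset.card_le_card hsub2
    have hc2 := Finset.card_union_le ((α : Finset (Fin (2*d+1))) ∩ β')
      ((β : Finset (Fin (2*d+1)))ᶜ \ β')
    rw [card_sdiff_eq α β] at hc1
    unfold t at hc1 ⊢
    omega
  have := t_le α β
  omega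

lemma fdist_step (α β β' : OddVertex d) (h : (oddGraph d).Adj β β') :
    fdist α β ≤ fdist α β' + 1 := by
  obtain ⟨h1, h2⟩ := step α β β' h
  have := t_le α β
  have := t_le α β'
  unfold fdist
  omega

lemma fdist_le_length {α β : OddVertex d} (p : (oddGraph d).Walk α β) :
    fdist α β ≤ p.length := by
  induction p with
  | nil => simp [fdist, t_self]
  | @cons u v w h p ih =>
      have h1 : fdist w u ≤ fdist w v + 1 := fdist_step w u v h
      have hcomm : ∀ x y : OddVertex d, fdist x y = fdist y x := by
        intro x y; unfold fdist; rw [t_comm]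
      rw [hcomm w u, hcomm w v] at h1
      rw [SimpleGraph.Walk.length_cons]
      omega

/-- Construct a vertex by deleting an element of the complement. -/
def eraseVert (β : OddVertex d) (x : Fin (2*d+1))
    (hx : x ∈ (β : Finset (Fin (2*d+1)))ᶜ) : OddVertex d :=
  ⟨((β : Finset (Fin (2*d+1)))ᶜ).erase x, by
    rw [Finset.card_erase_of_mem hx, card_compl]
    omega⟩

lemma adj_eraseVert (hd : 1 ≤ d) (β : OddVertex d) (x : Fin (2*d+1))
    (hx : x ∈ (β : Finset (Fin (2*d+1)))ᶜ) :
    (oddGraph d).Adj (eraseVert β x hx) β := by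
  constructor
  · intro heq
    have hval : ((β : Finset (Fin (2*d+1)))ᶜ).erase x = (β : Finset (Fin (2*d+1))) :=
      congrArg Subtype.val heq
    have hne : (β : Finset (Fin (2*d+1))).Nonempty := by
      rw [← Finset.card_pos, β.2]; omega
    obtain ⟨y, hy⟩ := hne
    have hy2 : y ∈ ((β : Finset (Fin (2*d+1)))ᶜ).erase x := by rw [hval]; exact hy
    exact (Finset.mem_compl.mp (Finset.mem_of_mem_erase hy2)) hy
  · apply Finset.disjoint_left.mpr
    intro a ha hab
    exact (Finset.mem_compl.mp (Finset.mem_of_mem_erase ha)) hab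

/-- Intersection with an erased complement. -/
lemma inter_erase (α β : OddVertex d) (x : Fin (2*d+1)) :
    (α : Finset (Fin (2*d+1))) ∩ (((β : Finset (Fin (2*d+1)))ᶜ).erase x)
      = ((α : Finset (Fin (2*d+1))) ∩ (β : Finset (Fin (2*d+1)))ᶜ).erase x := by
  ext y
  simp only [Finset.mem_inter, Finset.mem_erase]
  tauto

lemma t_eraseVert_mem (α β : OddVertex d) (x : Fin (2*d+1))
    (hx : x ∈ (β : Finset (Fin (2*d+1)))ᶜ) (hxα : x ∈ (α : Finset (Fin (2*d+1)))) :
    t α (eraseVert β x hx) = d - t α β - 1 := by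
  show ((α : Finset (Fin (2*d+1))) ∩ (((β : Finset (Fin (2*d+1)))ᶜ).erase x)).card = _
  rw [inter_erase, Finset.card_erase_of_mem (Finset.mem_inter.mpr ⟨hxα, hx⟩), card_inter_compl]

lemma t_eraseVert_not_mem (α β : OddVertex d) (x : Fin (2*d+1))
    (hx : x ∈ (β : Finset (Fin (2*d+1)))ᶜ) (hxα : x ∉ (α : Finset (Fin (2*d+1)))) :
    t α (eraseVert β x hx) = d - t α β := by
  show ((α : Finset (Fin (2*d+1))) ∩ (((β : Finset (Fin (2*d+1)))ᶜ).erase x)).card = _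
  rw [inter_erase, Finset.erase_eq_of_notMem
    (fun hc => hxα (Finset.mem_inter.mp hc).1), card_inter_compl]

lemma exists_walk (hd : 1 ≤ d) : ∀ (n : ℕ) (α β : OddVertex d), fdist α β = n →
    ∃ p : (oddGraph d).Walk α β, p.length = n := by
  intro n
  induction n with
  | zero =>
      intro α β hf
      have ht : t α β = d := by
        have := t_le α β
        unfold fdist at hf
        omega
      rcases eq_of_t_eq ht
      exact ⟨SimpleGraph.Walk.nil, rfl⟩
  | succ n ih =>
      intro α β hf
      have htle := t_le α β
      by_cases hc : 2 * t α β + 1 ≤ 2 * (d - t α β)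
      · -- odd route: pick x ∈ βᶜ \ α
        have hcard : (((β : Finset (Fin (2*d+1)))ᶜ) \ α).card = t α β + 1 := by
          have h1 := Finset.card_inter_add_card_sdiff ((β : Finset (Fin (2*d+1)))ᶜ)
            (α : Finset (Fin (2*d+1)))
          rw [Finset.inter_comm, card_inter_compl, card_compl] at h1
          omega
        obtain ⟨x, hx⟩ : (((β : Finset (Fin (2*d+1)))ᶜ) \ α).Nonempty := by
          rw [← Finset.card_pos, hcard]; omega
        rw [Finset.mem_sdiff] at hx
        have ht' : t α (eraseVert β x hx.1) = d - t α β :=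
          t_eraseVert_not_mem α β x hx.1 hx.2
        have hf' : fdist α (eraseVert β x hx.1) = n := by
          unfold fdist at hf ⊢
          rw [ht']
          omega
        obtain ⟨p, hp⟩ := ih α (eraseVert β x hx.1) hf'
        exact ⟨p.concat (adj_eraseVert hd β x hx.1), by
          rw [SimpleGraph.Walk.length_concat, hp]⟩
      · -- even route: pick x ∈ βᶜ ∩ α
        have hdt : 1 ≤ d - t α β := by
          unfold fdist at hf
          omega
        obtain ⟨x, hx⟩ : (((β : Finset (Fin (2*d+1)))ᶜ) ∩ α).Nonempty := by
          rw [← Finset.card_pos, Finset.inter_comm, card_inter_compl]; omega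
        rw [Finset.mem_inter] at hx
        have ht' : t α (eraseVert β x hx.1) = d - t α β - 1 :=
          t_eraseVert_mem α β x hx.1 hx.2
        have hf' : fdist α (eraseVert β x hx.1) = n := by
          unfold fdist at hf ⊢
          rw [ht']
          omega
        obtain ⟨p, hp⟩ := ih α (eraseVert β x hx.1) hf'
        exact ⟨p.concat (adj_eraseVert hd β x hx.1), by
          rw [SimpleGraph.Walk.length_concat, hp]⟩

lemma dist_eq (hd : 1 ≤ d) (α β : OddVertex d) :
    (oddGraph d).dist α β = fdist α β := by
  obtain ⟨p, hp⟩ := exists_walk hd (fdist α β) α β rfl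
  have hub : (oddGraph d).dist α β ≤ fdist α β := hp ▸ SimpleGraph.dist_le p
  have hr : (oddGraph d).Reachable α β := ⟨p⟩
  obtain ⟨q, hq⟩ := hr.exists_walk_length_eq_dist
  have hlb := fdist_le_length q
  omega

end OddAux

open OddAux
/-- in the Odd graph `O_{d+1}` (`d ≥ 3`), with respect to any vertex `γ`:
(1) for `1 ≤ h ≤ d - 1` the `h`-th subconstituent has no edges, and (2) the `d`-th
subconstituent is regular of valency `⌈(d+1)/2⌉` (which equals `(d+2)/2` in natural
number division). -/
theorem oddGraph_subconstituents (d : ℕ) (hd : 3 ≤ d) (γ : OddVertex d) :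
    (∀ h : ℕ, 1 ≤ h → h ≤ d - 1 → ∀ α β : OddVertex d,
      (oddGraph d).dist γ α = h → (oddGraph d).dist γ β = h → ¬ (oddGraph d).Adj α β)
    ∧ (∀ α : OddVertex d, (oddGraph d).dist γ α = d →
        Nat.card {β : OddVertex d | (oddGraph d).Adj α β ∧ (oddGraph d).dist γ β = d}
          = (d + 2) / 2) := by
  have hd1 : 1 ≤ d := by omega
  constructor
  · intro h h1 h2 α β hα hβ hadj
    rw [dist_eq hd1] at hα hβ
    obtain ⟨hs1, hs2⟩ := step γ α β hadj
    have := t_le γ α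
    have := t_le γ β
    unfold fdist at hα hβ
    omega
  · intro α hα
    classical
    rw [dist_eq hd1] at hα
    have hta : t γ α = d / 2 := by
      have := t_le γ α
      unfold fdist at hα
      omega
    have hcA : ((α : Finset (Fin (2*d+1)))ᶜ).card = d + 1 := card_compl α
    have hcγA : ((γ : Finset (Fin (2*d+1))) ∩ (α : Finset (Fin (2*d+1)))ᶜ).card = d - d / 2 := by
      rw [card_inter_compl, hta]
    set D : Finset (Fin (2*d+1)) :=
      if d % 2 = 0 then (α : Finset (Fin (2*d+1)))ᶜ \ (γ : Finset (Fin (2*d+1)))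
      else (α : Finset (Fin (2*d+1)))ᶜ ∩ (γ : Finset (Fin (2*d+1)))
      with hD
    have hDsub : D ⊆ (α : Finset (Fin (2*d+1)))ᶜ := by
      rw [hD]; split_ifs
      · exact Finset.sdiff_subset
      · exact Finset.inter_subset_left
    have hDmem : ∀ x, x ∈ D ↔ x ∈ (α : Finset (Fin (2*d+1)))ᶜ ∧
        ((x ∈ (γ : Finset (Fin (2*d+1)))) ↔ d % 2 = 1) := by
      intro x
      rw [hD]
      by_cases hpar : d % 2 = 0
      · rw [if_pos hpar]
        simp only [Finset.mem_sdiff]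
        constructor
        · rintro ⟨ha, hb⟩
          exact ⟨ha, ⟨fun hh => absurd hh hb, fun hh => absurd hpar (by omega)⟩⟩
        · rintro ⟨ha, hb⟩
          exact ⟨ha, fun hh => by have := hb.mp hh; omega⟩
      · rw [if_neg hpar]
        simp only [Finset.mem_inter]
        constructor
        · rintro ⟨ha, hb⟩
          exact ⟨ha, ⟨fun _ => by omega, fun _ => hb⟩⟩
        · rintro ⟨ha, hb⟩
          exact ⟨ha, hb.mpr (by omega)⟩
    set F : Finset (OddVertex d) :=
      D.attach.image (fun x => eraseVert α x.1 (hDsub x.2)) with hF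
    have hmemF : ∀ β : OddVertex d, β ∈ F ↔
        ∃ (x : Fin (2*d+1)) (hx : x ∈ D), β = eraseVert α x (hDsub hx) := by
      intro β
      rw [hF, Finset.mem_image]
      constructor
      · rintro ⟨⟨x, hx⟩, -, rfl⟩; exact ⟨x, hx, rfl⟩
      · rintro ⟨x, hx, rfl⟩; exact ⟨⟨x, hx⟩, Finset.mem_attach _ _, rfl⟩
    have hset : {β : OddVertex d | (oddGraph d).Adj α β ∧ (oddGraph d).dist γ β = d}
        = (↑F : Set (OddVertex d)) := by
      ext β
      simp only [Set.mem_setOf_eq, Finset.mem_coe]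
      rw [hmemF]
      constructor
      · rintro ⟨hadj, hdist⟩
        rw [dist_eq hd1] at hdist
        have htb : t γ β = d / 2 := by
          have := t_le γ β
          unfold fdist at hdist
          omega
        have hsub : (β : Finset (Fin (2*d+1))) ⊆ (α : Finset (Fin (2*d+1)))ᶜ :=
          subset_compl_of_adj hadj
        have hone : (((α : Finset (Fin (2*d+1)))ᶜ) \ β).card = 1 := by
          rw [Finset.card_sdiff_of_subset hsub, hcA, β.2]; omega
        obtain ⟨x, hx⟩ := Finset.card_eq_one.mp hone
        have hxA : x ∈ ((α : Finset (Fin (2*d+1)))ᶜ) ∧ x ∉ (β : Finset (Fin (2*d+1))) := by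
          have : x ∈ ((α : Finset (Fin (2*d+1)))ᶜ) \ β := hx ▸ Finset.mem_singleton_self x
          exact Finset.mem_sdiff.mp this
        have hβval : (β : Finset (Fin (2*d+1))) = ((α : Finset (Fin (2*d+1)))ᶜ).erase x := by
          rw [Finset.erase_eq, ← hx, Finset.sdiff_sdiff_eq_self hsub]
        have hxD : x ∈ D := by
          rw [hDmem]
          refine ⟨hxA.1, ?_⟩
          by_cases hxγ : x ∈ (γ : Finset (Fin (2*d+1)))
          · have htval := t_eraseVert_mem γ α x hxA.1 hxγ
            rw [show eraseVert α x hxA.1 = β from (Subtype.ext hβval).symm, htb, hta] at htval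
            exact ⟨fun _ => by omega, fun _ => hxγ⟩
          · have htval := t_eraseVert_not_mem γ α x hxA.1 hxγ
            rw [show eraseVert α x hxA.1 = β from (Subtype.ext hβval).symm, htb, hta] at htval
            exact ⟨fun hh => absurd hh hxγ, fun hh => by omega⟩
        exact ⟨x, hxD, Subtype.ext hβval⟩
      · rintro ⟨x, hxD, rfl⟩
        have hxA := hDsub hxD
        refine ⟨((adj_eraseVert hd1 α x hxA)).symm, ?_⟩
        rw [dist_eq hd1]
        have hxiff := (hDmem x).mp hxD
        have htb : t γ (eraseVert α x (hDsub hxD)) = d / 2 := by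
          by_cases hxγ : x ∈ (γ : Finset (Fin (2*d+1)))
          · have htval := t_eraseVert_mem γ α x (hDsub hxD) hxγ
            rw [hta] at htval
            have := hxiff.2.mp hxγ
            omega
          · have htval := t_eraseVert_not_mem γ α x (hDsub hxD) hxγ
            rw [hta] at htval
            have : ¬ d % 2 = 1 := fun hh => hxγ (hxiff.2.mpr hh)
            omega
        unfold fdist
        rw [htb]
        omega
    rw [hset, Nat.card_coe_set_eq, Set.ncard_coe_finset]
    have hinj : Set.InjOn (fun x : {y // y ∈ D} => eraseVert α x.1 (hDsub x.2))
        ↑D.attach := by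
      intro x _ y _ hxy
      have hval : ((α : Finset (Fin (2*d+1)))ᶜ).erase x.1
          = ((α : Finset (Fin (2*d+1)))ᶜ).erase y.1 := congrArg Subtype.val hxy
      exact Subtype.ext (Finset.erase_injOn _ (by simpa using hDsub x.2)
        (by simpa using hDsub y.2) hval)
    rw [hF, Finset.card_image_of_injOn hinj, Finset.card_attach]
    have hcard2 := Finset.card_inter_add_card_sdiff ((α : Finset (Fin (2*d+1)))ᶜ)
      (γ : Finset (Fin (2*d+1)))
    rw [hcA] at hcard2
    have hAγ : (((α : Finset (Fin (2*d+1)))ᶜ) ∩ γ).card = d - d / 2 := by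
      rw [Finset.inter_comm]; exact hcγA
    rw [hD]
    split_ifs with hpar
    · omega
    · rw [hAγ]; omega
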